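/- The set Δ⁺ = {F ∈ Δ : F(x) = 0 for all x ≤ 0} of distance distribution functions is a closed subset of the metric space (Δ, d_L); consequently (Δ⁺, d_L) is compact and complete. -/

import Mathlib

/-- The modified Lévy distance between two functions `F G : ℝ → ℝ`:
the infimum of all `h > 0` such that for every `x ∈ (-1/h, 1/h)` the inequalities
`F (x - h) - h ≤ G x ≤ F (x + h) + h` and `G (x - h) - h ≤ F x ≤ G (x + h) + h` hold. -/
noncomputable def dL (F G : ℝ → ℝ) : ℝ :=
  sInf {h : ℝ | 0 < h ∧ ∀ x ∈ Set.Ioo (-h⁻¹) h⁻¹,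
    (F (x - h) - h ≤ G x ∧ G x ≤ F (x + h) + h) ∧
    (G (x - h) - h ≤ F x ∧ F x ≤ G (x + h) + h)}

/-- A distribution function: a nondecreasing, left-continuous function `F : ℝ → [0,1]`
(the extension to `±∞` by `0`, `1` being implicit). `Δ` is the set of all such functions. -/
def IsDistributionFn (F : ℝ → ℝ) : Prop :=
  Monotone F ∧ (∀ x : ℝ, ContinuousWithinAt F (Set.Iio x) x) ∧
    (∀ x : ℝ, 0 ≤ F x) ∧ (∀ x : ℝ, F x ≤ 1)

open Filter Set

namespace LevyAux

/-- The defining set of the modified Lévy distance. -/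
def S (F G : ℝ → ℝ) : Set ℝ :=
  {h : ℝ | 0 < h ∧ ∀ x ∈ Set.Ioo (-h⁻¹) h⁻¹,
    (F (x - h) - h ≤ G x ∧ G x ≤ F (x + h) + h) ∧
    (G (x - h) - h ≤ F x ∧ F x ≤ G (x + h) + h)}

lemma dL_eq (F G : ℝ → ℝ) : dL F G = sInf (S F G) := rfl

lemma S_symm {F G : ℝ → ℝ} {h : ℝ} (hh : h ∈ S F G) : h ∈ S G F :=
  ⟨hh.1, fun x hx => ⟨(hh.2 x hx).2, (hh.2 x hx).1⟩⟩

lemma one_mem_S {F G : ℝ → ℝ} (hF0 : ∀ x, 0 ≤ F x) (hF1 : ∀ x, F x ≤ 1)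
    (hG0 : ∀ x, 0 ≤ G x) (hG1 : ∀ x, G x ≤ 1) : (1 : ℝ) ∈ S F G := by
  refine ⟨one_pos, fun x _ => ?_⟩
  have := hF0 (x - 1); have := hF1 (x - 1); have := hF0 (x + 1); have := hF1 (x + 1)
  have := hG0 (x - 1); have := hG1 (x - 1); have := hG0 (x + 1); have := hG1 (x + 1)
  have := hF0 x; have := hF1 x; have := hG0 x; have := hG1 x
  exact ⟨⟨by linarith, by linarith⟩, ⟨by linarith, by linarith⟩⟩

lemma bddBelow_S (F G : ℝ → ℝ) : BddBelow (S F G) :=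
  ⟨0, fun h hh => hh.1.le⟩

lemma dL_nonneg (F G : ℝ → ℝ) : 0 ≤ dL F G :=
  Real.sInf_nonneg (fun _ hh => hh.1.le)

lemma dL_le_of_mem {F G : ℝ → ℝ} {h : ℝ} (hh : h ∈ S F G) : dL F G ≤ h :=
  csInf_le (bddBelow_S F G) hh

lemma exists_mem_S_lt {F G : ℝ → ℝ} {ε : ℝ} (hne : (S F G).Nonempty)
    (h : dL F G < ε) : ∃ h' ∈ S F G, h' < ε :=
  exists_lt_of_csInf_lt hne h

/-- Key arithmetic fact for the triangle inequality with the modified window. -/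
lemma window_key {h1 h2 : ℝ} (p1 : 0 < h1) (p2 : 0 < h2) (hs : h1 + h2 < 1) :
    (h1 + h2)⁻¹ + h2 ≤ h1⁻¹ := by
  have hp : 0 < h1 + h2 := by linarith
  rw [← sub_nonneg]
  have key : h1⁻¹ - ((h1 + h2)⁻¹ + h2) = (h2 * (1 - h1 * (h1 + h2))) / (h1 * (h1 + h2)) := by
    field_simp
    ring
  rw [key]
  apply div_nonneg _ (by positivity)
  have : h1 * (h1 + h2) ≤ 1 := by nlinarith
  nlinarith

lemma inv_le_inv_add {h1 h2 : ℝ} (p1 : 0 < h1) (p2 : 0 < h2) :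
    (h1 + h2)⁻¹ ≤ h1⁻¹ := by
  apply inv_anti₀ p1; linarith

/-- Pointwise triangle inequality for the defining sets. -/
lemma add_mem_S {F G H : ℝ → ℝ} {h1 h2 : ℝ} (m1 : h1 ∈ S F G) (m2 : h2 ∈ S G H)
    (hlt : h1 + h2 < 1) : h1 + h2 ∈ S F H := by
  obtain ⟨p1, c1⟩ := m1
  obtain ⟨p2, c2⟩ := m2
  have hp : 0 < h1 + h2 := by linarith
  have k12 : (h1 + h2)⁻¹ + h2 ≤ h1⁻¹ := window_key p1 p2 hlt
  have k21 : (h1 + h2)⁻¹ + h1 ≤ h2⁻¹ := by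
    rw [add_comm h1 h2]; exact window_key p2 p1 (by linarith)
  have i1 : (h1 + h2)⁻¹ ≤ h1⁻¹ := inv_le_inv_add p1 p2
  have i2 : (h1 + h2)⁻¹ ≤ h2⁻¹ := by
    rw [add_comm]; exact inv_le_inv_add p2 p1
  refine ⟨hp, fun x hx => ?_⟩
  obtain ⟨hxl, hxr⟩ := hx
  have w1 : x + h2 ∈ Set.Ioo (-h1⁻¹) h1⁻¹ := ⟨by linarith, by linarith⟩
  have w2 : x - h2 ∈ Set.Ioo (-h1⁻¹) h1⁻¹ := ⟨by linarith, by linarith⟩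
  have w3 : x + h1 ∈ Set.Ioo (-h2⁻¹) h2⁻¹ := ⟨by linarith, by linarith⟩
  have w4 : x - h1 ∈ Set.Ioo (-h2⁻¹) h2⁻¹ := ⟨by linarith, by linarith⟩
  have wx1 : x ∈ Set.Ioo (-h1⁻¹) h1⁻¹ := ⟨by linarith, by linarith⟩
  have wx2 : x ∈ Set.Ioo (-h2⁻¹) h2⁻¹ := ⟨by linarith, by linarith⟩
  constructor
  constructor
  · -- F (x - (h1+h2)) - (h1+h2) ≤ H x
    have a1 := (c1 (x - h2) w2).1.1  -- F (x - h2 - h1) - h1 ≤ G (x - h2)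
    have a2 := (c2 x wx2).1.1        -- G (x - h2) - h2 ≤ H x
    have e : x - (h1 + h2) = x - h2 - h1 := by ring
    rw [e]; linarith
  · -- H x ≤ F (x + (h1+h2)) + (h1+h2)
    have a1 := (c2 x wx2).1.2        -- H x ≤ G (x + h2) + h2
    have a2 := (c1 (x + h2) w1).1.2  -- G (x + h2) ≤ F (x + h2 + h1) + h1
    have e : x + (h1 + h2) = x + h2 + h1 := by ring
    rw [e]; linarith
  constructor
  · -- H (x - (h1+h2)) - (h1+h2) ≤ F x
    have a1 := (c2 (x - h1) w4).2.1  -- H (x - h1 - h2) - h2 ≤ G (x - h1)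
    have a2 := (c1 x wx1).2.1        -- G (x - h1) - h1 ≤ F x
    have e : x - (h1 + h2) = x - h1 - h2 := by ring
    rw [e]; linarith
  · -- F x ≤ H (x + (h1+h2)) + (h1+h2)
    have a1 := (c1 x wx1).2.2        -- F x ≤ G (x + h1) + h1
    have a2 := (c2 (x + h1) w3).2.2  -- G (x + h1) ≤ H (x + h1 + h2) + h2
    have e : x + (h1 + h2) = x + h1 + h2 := by ring
    rw [e]; linarith

/-- The candidate limit distribution function built from values on the rationals. -/
noncomputable def limF (g : ℚ → ℝ) (x : ℝ) : ℝ :=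
  sSup (insert 0 (g '' {q : ℚ | (q : ℝ) < x}))

section limF

variable {g : ℚ → ℝ}

lemma limF_bddAbove (hg1 : ∀ q, g q ≤ 1) (x : ℝ) : BddAbove (insert 0 (g '' {q : ℚ | (q : ℝ) < x})) := by
  refine ⟨1, ?_⟩
  rintro y (rfl | ⟨q, _, rfl⟩)
  · norm_num
  · exact hg1 q

lemma limF_nonneg (hg1 : ∀ q, g q ≤ 1) (x : ℝ) : 0 ≤ limF g x :=
  le_csSup (limF_bddAbove hg1 x) (Set.mem_insert _ _)

lemma limF_le_one (hg1 : ∀ q, g q ≤ 1) (x : ℝ) : limF g x ≤ 1 := by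
  apply csSup_le (Set.insert_nonempty _ _)
  rintro y (rfl | ⟨q, _, rfl⟩)
  · norm_num
  · exact hg1 q

lemma g_le_limF (hg1 : ∀ q, g q ≤ 1) {q : ℚ} {x : ℝ} (h : (q : ℝ) < x) : g q ≤ limF g x :=
  le_csSup (limF_bddAbove hg1 x) (Set.mem_insert_of_mem _ ⟨q, h, rfl⟩)

lemma limF_le {x c : ℝ} (hc : 0 ≤ c) (h : ∀ q : ℚ, (q : ℝ) < x → g q ≤ c) :
    limF g x ≤ c := by
  apply csSup_le (Set.insert_nonempty _ _)
  rintro y (rfl | ⟨q, hq, rfl⟩)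
  · exact hc
  · exact h q hq

lemma limF_mono (hg1 : ∀ q, g q ≤ 1) : Monotone (limF g) := by
  intro x y hxy
  apply csSup_le_csSup (limF_bddAbove hg1 y) (Set.insert_nonempty _ _)
  apply Set.insert_subset_insert
  apply Set.image_mono
  intro q hq
  exact lt_of_lt_of_le hq hxy

lemma limF_leftCont (hg1 : ∀ q, g q ≤ 1) (x : ℝ) : ContinuousWithinAt (limF g) (Set.Iio x) x := by
  have hmF : Monotone (limF g) := limF_mono hg1
  have key : sSup (limF g '' Set.Iio x) = limF g x := by
    have hba : BddAbove (limF g '' Set.Iio x) := by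
      refine ⟨1, ?_⟩; rintro y ⟨z, _, rfl⟩; exact limF_le_one hg1 z
    have hne : (limF g '' Set.Iio x).Nonempty := ⟨limF g (x - 1), ⟨x - 1, by simp, rfl⟩⟩
    apply le_antisymm
    · apply csSup_le hne
      rintro y ⟨z, hz, rfl⟩
      exact hmF hz.le
    · apply csSup_le (Set.insert_nonempty _ _)
      rintro y (rfl | ⟨q, hq, rfl⟩)
      · calc (0 : ℝ) ≤ limF g (x - 1) := limF_nonneg hg1 _
          _ ≤ sSup (limF g '' Set.Iio x) := le_csSup hba ⟨x - 1, by simp, rfl⟩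
      · have hq' : (q : ℝ) < ((q : ℝ) + x) / 2 := by rw [Set.mem_setOf_eq] at hq; linarith
        have hy : ((q : ℝ) + x) / 2 < x := by rw [Set.mem_setOf_eq] at hq; linarith
        calc g q ≤ limF g (((q : ℝ) + x) / 2) := g_le_limF hg1 hq'
          _ ≤ sSup (limF g '' Set.Iio x) := le_csSup hba ⟨_, hy, rfl⟩
  have := hmF.tendsto_nhdsLT x
  rw [key] at this
  exact this

end limF

/-- Grid lemma: for a rational spacing `δ` and a bound `Mq`, every real `a ∈ [-Mq, Mq]`
has a grid rational in `[a, a + δ)` with bounded index. -/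
lemma exists_grid (δ : ℚ) (hδ : 0 < δ) (Mq : ℕ) {a : ℝ}
    (ha : -(Mq : ℝ) ≤ a) (ha2 : a ≤ (Mq : ℝ)) :
    ∃ j < ⌈(2 * (Mq : ℝ)) / (δ : ℝ)⌉₊ + 1,
      a ≤ ((-(Mq : ℚ) + (j : ℚ) * δ : ℚ) : ℝ) ∧
      ((-(Mq : ℚ) + (j : ℚ) * δ : ℚ) : ℝ) < a + (δ : ℝ) := by
  have hδR : (0 : ℝ) < (δ : ℝ) := by exact_mod_cast hδ
  set j := ⌈(a + (Mq : ℝ)) / (δ : ℝ)⌉₊ with hj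
  have hnn : 0 ≤ (a + (Mq : ℝ)) / (δ : ℝ) := div_nonneg (by linarith) hδR.le
  have h1 : (a + (Mq : ℝ)) / (δ : ℝ) ≤ (j : ℝ) := Nat.le_ceil _
  have h2 : (j : ℝ) < (a + (Mq : ℝ)) / (δ : ℝ) + 1 := Nat.ceil_lt_add_one hnn
  have hcast : ((-(Mq : ℚ) + (j : ℚ) * δ : ℚ) : ℝ) = -(Mq : ℝ) + (j : ℝ) * (δ : ℝ) := by
    push_cast; ring
  refine ⟨j, ?_, ?_, ?_⟩
  · have hle : (a + (Mq : ℝ)) / (δ : ℝ) ≤ (2 * (Mq : ℝ)) / (δ : ℝ) := by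
      gcongr
      linarith
    calc j ≤ ⌈(2 * (Mq : ℝ)) / (δ : ℝ)⌉₊ := Nat.ceil_le_ceil hle
      _ < _ := Nat.lt_succ_self _
  · rw [hcast]
    rw [div_le_iff₀ hδR] at h1
    linarith
  · rw [hcast]
    have h3 : (j : ℝ) * (δ : ℝ) < a + (Mq : ℝ) + (δ : ℝ) := by
      have hmul := mul_lt_mul_of_pos_right h2 hδR
      rw [add_mul, div_mul_cancel₀ _ hδR.ne', one_mul] at hmul
      linarith
    linarith

/-- Main convergence lemma: if the `Fk` converge pointwise on the rationals to `g`,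
then they converge to `limF g` in the modified Lévy distance. -/
lemma eventually_mem_S {Fk : ℕ → ℝ → ℝ} {g : ℚ → ℝ}
    (hmono : ∀ k, Monotone (Fk k)) (h0 : ∀ k x, 0 ≤ Fk k x) (h1 : ∀ k x, Fk k x ≤ 1)
    (hg : ∀ q : ℚ, Tendsto (fun k => Fk k (q : ℝ)) atTop (nhds (g q)))
    {e : ℝ} (he : 0 < e) :
    ∀ᶠ k in atTop, e ∈ S (Fk k) (limF g) := by
  -- basic facts about g
  have hg0 : ∀ q, 0 ≤ g q := fun q =>
    le_of_tendsto_of_tendsto' tendsto_const_nhds (hg q) (fun k => h0 k q)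
  have hg1 : ∀ q, g q ≤ 1 := fun q =>
    le_of_tendsto_of_tendsto' (hg q) tendsto_const_nhds (fun k => h1 k q)
  have hgm : Monotone g := fun a b hab =>
    le_of_tendsto_of_tendsto' (hg a) (hg b) (fun k => hmono k (by exact_mod_cast hab))
  set F := limF g with hF
  -- choose parameters
  obtain ⟨δ, hδ0, hδe⟩ := exists_rat_btwn (half_pos he)
  rw [Rat.cast_pos] at hδ0
  set Mq : ℕ := ⌈e⁻¹ + e + 1⌉₊ with hMq
  have hM : e⁻¹ + e + 1 ≤ (Mq : ℝ) := Nat.le_ceil _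
  have hMpos : (0:ℝ) < Mq := by
    have : (0:ℝ) < e⁻¹ + e + 1 := by positivity
    linarith
  set K : ℕ := ⌈(2 * (Mq : ℝ)) / (δ : ℝ)⌉₊ + 1 with hK
  set q : ℕ → ℚ := fun j => -(Mq : ℚ) + (j : ℚ) * δ with hq
  -- uniform convergence at the grid points
  have hev : ∀ᶠ k in atTop, ∀ j ∈ Finset.range K, |Fk k ((q j : ℝ)) - g (q j)| < e / 2 := by
    rw [eventually_all_finset]
    intro j _
    have := (hg (q j)).eventually (Metric.ball_mem_nhds (g (q j)) (half_pos he))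
    filter_upwards [this] with k hk
    rw [Real.dist_eq] at hk
    exact hk
  filter_upwards [hev] with k hk
  -- now prove membership
  refine ⟨he, fun x hx => ?_⟩
  obtain ⟨hxl, hxr⟩ := hx
  have hδR : (0:ℝ) < (δ:ℝ) := by exact_mod_cast hδ0
  have hδe' : (δ:ℝ) < e / 2 := hδe
  -- helper to obtain grid points
  have grid : ∀ a : ℝ, -(Mq:ℝ) ≤ a → a ≤ (Mq:ℝ) →
      ∃ j < K, a ≤ ((q j : ℚ) : ℝ) ∧ ((q j : ℚ) : ℝ) < a + (δ:ℝ) := by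
    intro a h1a h2a
    obtain ⟨j, hjK, hj1, hj2⟩ := exists_grid δ hδ0 Mq h1a h2a
    exact ⟨j, hjK, hj1, hj2⟩
  have hxlo : -(Mq:ℝ) ≤ x - e := by
    have : -e⁻¹ - e ≥ -(Mq:ℝ) := by linarith
    linarith
  have hxhi : x + e / 2 ≤ (Mq:ℝ) := by linarith
  have close : ∀ j, j < K → |Fk k ((q j : ℝ)) - g (q j)| < e / 2 := fun j hj =>
    hk j (Finset.mem_range.mpr hj)
  constructor
  constructor
  · -- Fk k (x - e) - e ≤ F x
    obtain ⟨j, hjK, hj1, hj2⟩ := grid (x - e) hxlo (by linarith)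
    have hcl := close j hjK
    rw [abs_sub_lt_iff] at hcl
    have hqx : ((q j : ℚ) : ℝ) < x := by linarith
    have m1 : Fk k (x - e) ≤ Fk k ((q j : ℝ)) := hmono k hj1
    have m2 : g (q j) ≤ F x := g_le_limF hg1 hqx
    linarith [hcl.1]
  · -- F x ≤ Fk k (x + e) + e
    obtain ⟨j, hjK, hj1, hj2⟩ := grid (x + e / 2) (by linarith) hxhi
    have hcl := close j hjK
    rw [abs_sub_lt_iff] at hcl
    apply limF_le (by linarith [h0 k (x + e)])
    intro r hr
    have hrq : r ≤ q j := by
      have : (r : ℝ) < ((q j : ℚ) : ℝ) := by linarith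
      exact_mod_cast this.le
    have m1 : g r ≤ g (q j) := hgm hrq
    have m2 : Fk k ((q j : ℝ)) ≤ Fk k (x + e) := hmono k (by linarith)
    linarith [hcl.2]
  constructor
  · -- F (x - e) - e ≤ Fk k x
    obtain ⟨j, hjK, hj1, hj2⟩ := grid (x - e) hxlo (by linarith)
    have hcl := close j hjK
    rw [abs_sub_lt_iff] at hcl
    have key : F (x - e) ≤ Fk k x + e / 2 := by
      apply limF_le (by linarith [h0 k x])
      intro r hr
      have hrq : r ≤ q j := by
        have : (r : ℝ) < ((q j : ℚ) : ℝ) := by linarith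
        exact_mod_cast this.le
      have m1 : g r ≤ g (q j) := hgm hrq
      have m2 : Fk k ((q j : ℝ)) ≤ Fk k x := hmono k (by linarith)
      linarith [hcl.2]
    linarith
  · -- Fk k x ≤ F (x + e) + e
    obtain ⟨j, hjK, hj1, hj2⟩ := grid x (by linarith) (by linarith)
    have hcl := close j hjK
    rw [abs_sub_lt_iff] at hcl
    have hqx : ((q j : ℚ) : ℝ) < x + e := by linarith
    have m1 : Fk k x ≤ Fk k ((q j : ℝ)) := hmono k hj1
    have m2 : g (q j) ≤ F (x + e) := g_le_limF hg1 hqx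
    linarith [hcl.1]

lemma tendsto_dL_limF {Fk : ℕ → ℝ → ℝ} {g : ℚ → ℝ}
    (hmono : ∀ k, Monotone (Fk k)) (h0 : ∀ k x, 0 ≤ Fk k x) (h1 : ∀ k x, Fk k x ≤ 1)
    (hg : ∀ q : ℚ, Tendsto (fun k => Fk k (q : ℝ)) atTop (nhds (g q))) :
    Tendsto (fun k => dL (Fk k) (limF g)) atTop (nhds 0) := by
  rw [Metric.tendsto_atTop]
  intro ε hε
  have hev := eventually_mem_S hmono h0 h1 hg (half_pos hε)
  obtain ⟨N, hN⟩ := eventually_atTop.mp hev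
  refine ⟨N, fun k hk => ?_⟩
  have h1' : dL (Fk k) (limF g) ≤ ε / 2 := dL_le_of_mem (hN k hk)
  have h2' : 0 ≤ dL (Fk k) (limF g) := dL_nonneg _ _
  rw [Real.dist_eq, sub_zero, abs_of_nonneg h2']
  linarith

end LevyAux

open LevyAux

theorem deltaPlus_closed_compact_complete :
    (∀ (Fn : ℕ → ℝ → ℝ) (F : ℝ → ℝ),
      (∀ n, IsDistributionFn (Fn n) ∧ ∀ x : ℝ, x ≤ 0 → Fn n x = 0) →
      IsDistributionFn F →
      Filter.Tendsto (fun n => dL (Fn n) F) Filter.atTop (nhds 0) →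
      ∀ x : ℝ, x ≤ 0 → F x = 0) ∧
    (∀ Fn : ℕ → ℝ → ℝ,
      (∀ n, IsDistributionFn (Fn n) ∧ ∀ x : ℝ, x ≤ 0 → Fn n x = 0) →
      ∃ F : ℝ → ℝ, (IsDistributionFn F ∧ ∀ x : ℝ, x ≤ 0 → F x = 0) ∧
        ∃ φ : ℕ → ℕ, StrictMono φ ∧
          Filter.Tendsto (fun k => dL (Fn (φ k)) F) Filter.atTop (nhds 0)) ∧
    (∀ Fn : ℕ → ℝ → ℝ,
      (∀ n, IsDistributionFn (Fn n) ∧ ∀ x : ℝ, x ≤ 0 → Fn n x = 0) →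
      (∀ ε : ℝ, 0 < ε → ∃ N : ℕ, ∀ m ≥ N, ∀ n ≥ N, dL (Fn m) (Fn n) < ε) →
      ∃ F : ℝ → ℝ, (IsDistributionFn F ∧ ∀ x : ℝ, x ≤ 0 → F x = 0) ∧
        Filter.Tendsto (fun n => dL (Fn n) F) Filter.atTop (nhds 0)) := by
  -- Part 1: closedness
  have part1 : ∀ (Fn : ℕ → ℝ → ℝ) (F : ℝ → ℝ),
      (∀ n, IsDistributionFn (Fn n) ∧ ∀ x : ℝ, x ≤ 0 → Fn n x = 0) →
      IsDistributionFn F →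
      Filter.Tendsto (fun n => dL (Fn n) F) Filter.atTop (nhds 0) →
      ∀ x : ℝ, x ≤ 0 → F x = 0 := by
    intro Fn F hFn hF htend x hx
    obtain ⟨hFm, hFlc, hF0, hF1⟩ := hF
    -- first: F y = 0 for all y < 0
    have hneg : ∀ y : ℝ, y < 0 → F y = 0 := by
      intro y hy
      have hle : ∀ c : ℝ, 0 < c → F y ≤ c := by
        intro c hc
        set ε := min c (min (-y) (-y)⁻¹) with hε
        have hym : (0:ℝ) < -y := by linarith
        have hεpos : 0 < ε := lt_min hc (lt_min hym (inv_pos.mpr hym))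
        have hev : ∀ᶠ n in atTop, dL (Fn n) F < ε := by
          have := Metric.tendsto_atTop.mp htend ε hεpos
          obtain ⟨N, hN⟩ := this
          rw [eventually_atTop]
          refine ⟨N, fun n hn => ?_⟩
          have := hN n hn
          rw [Real.dist_eq, sub_zero] at this
          exact lt_of_abs_lt this
        obtain ⟨n, hn⟩ := hev.exists
        obtain ⟨hn1, _⟩ := hFn n
        obtain ⟨hm, _, h0, h1⟩ := hn1
        have hne : (S (Fn n) F).Nonempty := ⟨1, one_mem_S h0 h1 hF0 hF1⟩
        obtain ⟨h, hhS, hhε⟩ := exists_mem_S_lt hne hn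
        obtain ⟨hpos, hcond⟩ := hhS
        have hy1 : h < -y := lt_of_lt_of_le hhε (le_trans (min_le_right _ _) (min_le_left _ _))
        have hy2 : h < (-y)⁻¹ := lt_of_lt_of_le hhε (le_trans (min_le_right _ _) (min_le_right _ _))
        have hyw : y ∈ Set.Ioo (-h⁻¹) h⁻¹ := by
          constructor
          · have : -y < h⁻¹ := by
              rw [← inv_inv (-y)]
              exact inv_strictAnti₀ hpos hy2
            linarith
          · have : (0:ℝ) < h⁻¹ := by positivity
            linarith
        have := (hcond y hyw).1.2  -- F y ≤ Fn n (y + h) + h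
        have hyh : y + h ≤ 0 := by linarith
        rw [(hFn n).2 (y + h) hyh] at this
        have hc' : h < c := lt_of_lt_of_le hhε (min_le_left _ _)
        linarith
      have := hF0 y
      by_contra hne
      have hpos : 0 < F y := lt_of_le_of_ne this (Ne.symm hne)
      have := hle (F y / 2) (by linarith)
      linarith
    -- now x ≤ 0
    rcases lt_or_eq_of_le hx with hlt | rfl
    · exact hneg x hlt
    · -- x = 0: left-continuity
      have hcwa := hFlc 0
      have h1 : Filter.Tendsto F (nhdsWithin 0 (Set.Iio 0)) (nhds (F 0)) := hcwa
      have h2 : Filter.Tendsto F (nhdsWithin 0 (Set.Iio 0)) (nhds 0) := by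
        apply Tendsto.congr' _ tendsto_const_nhds
        filter_upwards [self_mem_nhdsWithin] with y hy
        exact (hneg y hy).symm
      exact tendsto_nhds_unique h1 h2
  -- Part 2: sequential compactness
  have part2 : ∀ Fn : ℕ → ℝ → ℝ,
      (∀ n, IsDistributionFn (Fn n) ∧ ∀ x : ℝ, x ≤ 0 → Fn n x = 0) →
      ∃ F : ℝ → ℝ, (IsDistributionFn F ∧ ∀ x : ℝ, x ≤ 0 → F x = 0) ∧
        ∃ φ : ℕ → ℕ, StrictMono φ ∧
          Filter.Tendsto (fun k => dL (Fn (φ k)) F) Filter.atTop (nhds 0) := by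
    intro Fn hFn
    have hmono : ∀ n, Monotone (Fn n) := fun n => (hFn n).1.1
    have h0 : ∀ n x, 0 ≤ Fn n x := fun n => (hFn n).1.2.2.1
    have h1 : ∀ n x, Fn n x ≤ 1 := fun n => (hFn n).1.2.2.2
    -- sequential compactness in the product of intervals
    set u : ℕ → (ℚ → Set.Icc (0:ℝ) 1) := fun n q => ⟨Fn n (q:ℝ), h0 n _, h1 n _⟩ with hu
    obtain ⟨L, φ, hφ, hconv⟩ := CompactSpace.tendsto_subseq u
    set g : ℚ → ℝ := fun q => (L q : ℝ) with hgdef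
    have hg : ∀ q : ℚ, Tendsto (fun k => Fn (φ k) (q : ℝ)) atTop (nhds (g q)) := by
      intro q
      have hcoord : Tendsto (fun k => (u ∘ φ) k q) atTop (nhds (L q)) :=
        (tendsto_pi_nhds.mp hconv) q
      have := (continuous_subtype_val.tendsto (L q)).comp hcoord
      exact this
    -- basic facts about g
    have hg0 : ∀ q, 0 ≤ g q := fun q => (L q).2.1
    have hg1 : ∀ q, g q ≤ 1 := fun q => (L q).2.2
    have hgm : Monotone g := fun a b hab =>
      le_of_tendsto_of_tendsto' (hg a) (hg b) (fun k => hmono (φ k) (by exact_mod_cast hab))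
    have hgz : ∀ q : ℚ, (q:ℝ) ≤ 0 → g q = 0 := by
      intro q hq
      have : Tendsto (fun k => Fn (φ k) (q:ℝ)) atTop (nhds 0) := by
        apply Tendsto.congr' _ tendsto_const_nhds
        filter_upwards with k
        exact ((hFn (φ k)).2 (q:ℝ) hq).symm
      exact tendsto_nhds_unique (hg q) this
    refine ⟨limF g, ⟨⟨limF_mono hg1, fun x => limF_leftCont hg1 x,
      fun x => limF_nonneg hg1 x, fun x => limF_le_one hg1 x⟩, ?_⟩, φ, hφ, ?_⟩
    · -- vanishing on (-∞, 0]
      intro x hx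
      apply le_antisymm _ (limF_nonneg hg1 x)
      apply limF_le le_rfl
      intro r hr
      have : (r:ℝ) ≤ 0 := by linarith
      rw [hgz r this]
    · exact tendsto_dL_limF (fun k => hmono (φ k)) (fun k => h0 (φ k))
        (fun k => h1 (φ k)) hg
  refine ⟨part1, part2, ?_⟩
  -- Part 3: completeness
  intro Fn hFn hCauchy
  obtain ⟨F, hFprop, φ, hφ, htend⟩ := part2 Fn hFn
  refine ⟨F, hFprop, ?_⟩
  have hmono : ∀ n, Monotone (Fn n) := fun n => (hFn n).1.1
  have h0 : ∀ n x, 0 ≤ Fn n x := fun n => (hFn n).1.2.2.1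
  have h1 : ∀ n x, Fn n x ≤ 1 := fun n => (hFn n).1.2.2.2
  obtain ⟨hFdf, _⟩ := hFprop
  obtain ⟨_, _, hF0, hF1⟩ := hFdf
  rw [Metric.tendsto_atTop]
  intro ε hε
  set e := min ε 1 / 2 with he
  have hepos : 0 < e := by
    apply div_pos _ two_pos; exact lt_min hε one_pos
  have he1 : e < 1 := by
    have : min ε 1 ≤ 1 := min_le_right _ _
    rw [he]; linarith
  have heε : e ≤ ε / 2 := by
    have : min ε 1 ≤ ε := min_le_left _ _
    rw [he]; linarith
  obtain ⟨N1, hN1⟩ := hCauchy (e / 2) (by linarith)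
  -- find index in the subsequence
  have hsub : ∀ᶠ k in atTop, dL (Fn (φ k)) F < e / 2 := by
    have := Metric.tendsto_atTop.mp htend (e / 2) (by linarith)
    obtain ⟨K, hK⟩ := this
    rw [eventually_atTop]
    refine ⟨K, fun k hk => ?_⟩
    have := hK k hk
    rw [Real.dist_eq, sub_zero] at this
    exact lt_of_abs_lt this
  obtain ⟨k0, hk0⟩ := (hsub.and (eventually_atTop.mpr ⟨N1, fun n hn => hn⟩ :
    ∀ᶠ k in atTop, N1 ≤ k)).exists
  obtain ⟨hk0a, hk0b⟩ := hk0
  have hφk0 : N1 ≤ φ k0 := le_trans hk0b (hφ.le_apply)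
  refine ⟨N1, fun n hn => ?_⟩
  -- triangle via elements
  have hc := hN1 n hn (φ k0) hφk0
  have hne1 : (S (Fn n) (Fn (φ k0))).Nonempty :=
    ⟨1, one_mem_S (h0 n) (h1 n) (h0 (φ k0)) (h1 (φ k0))⟩
  obtain ⟨t1, ht1S, ht1⟩ := exists_mem_S_lt hne1 hc
  have hne2 : (S (Fn (φ k0)) F).Nonempty :=
    ⟨1, one_mem_S (h0 (φ k0)) (h1 (φ k0)) hF0 hF1⟩
  obtain ⟨t2, ht2S, ht2⟩ := exists_mem_S_lt hne2 hk0a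
  have htsum : t1 + t2 < 1 := by linarith
  have hmem : t1 + t2 ∈ S (Fn n) F := add_mem_S ht1S ht2S htsum
  have hle : dL (Fn n) F ≤ t1 + t2 := dL_le_of_mem hmem
  have hnn : 0 ≤ dL (Fn n) F := dL_nonneg _ _
  rw [Real.dist_eq, sub_zero, abs_of_nonneg hnn]
  linarith
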